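/- The strong rank condition is Morita invariant: if R and S are Morita equivalent rings and R satisfies the strong rank condition, then S satisfies the strong rank condition. -/

import Mathlib

universe u v

open CategoryTheory

section Helpers

universe w w1 w2

open CategoryTheory.Limits

variable {A : Type*} [Ring A]

/-- Padding: an injective linear map `M^x → M^y` for `x ≤ y`. -/
lemma pad_exists (M : Type*) [AddCommGroup M] [Module A M] {x y : ℕ} (h : x ≤ y) :
    ∃ g : (Fin x → M) →ₗ[A] (Fin y → M), Function.Injective g := by
  refine ⟨LinearMap.pi (fun i : Fin y =>
    if h' : (i : ℕ) < x then LinearMap.proj (⟨(i : ℕ), h'⟩ : Fin x) else 0), ?_⟩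
  intro v w hvw
  funext j
  have h2 : ((⟨(j : ℕ), lt_of_lt_of_le j.isLt h⟩ : Fin y) : ℕ) < x := j.isLt
  have := congrFun hvw (⟨(j : ℕ), lt_of_lt_of_le j.isLt h⟩ : Fin y)
  simpa [LinearMap.pi_apply, dif_pos h2] using this

lemma compLeft_injective {M N : Type*} [AddCommGroup M] [Module A M] [AddCommGroup N]
    [Module A N] (f : M →ₗ[A] N) (hf : Function.Injective f) (I : Type*) :
    Function.Injective (f.compLeft I) := by
  intro v w h
  funext i
  apply hf
  exact congrFun h i

/-- Reindexing equivalence `(M^c)^a ≃ M^(a*c)`. -/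
noncomputable def reindexEquiv (M : Type*) [AddCommGroup M] [Module A M] (a c : ℕ) :
    (Fin a → Fin c → M) ≃ₗ[A] (Fin (a * c) → M) :=
  (LinearEquiv.curry A M (Fin a) (Fin c)).symm.trans
    (LinearEquiv.funCongrLeft A M finProdFinEquiv.symm)

/-- Splitting equivalence `M^(d+x) ≃ M^d × M^x`. -/
noncomputable def splitEquiv (M : Type*) [AddCommGroup M] [Module A M] (d x : ℕ) :
    (Fin (d + x) → M) ≃ₗ[A] (Fin d → M) × (Fin x → M) :=
  (LinearEquiv.funCongrLeft A M finSumFinEquiv).trans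
    (LinearEquiv.sumArrowLequivProdArrow (Fin d) (Fin x) A M)

/-- Iterating an injection `A^n ↪ A^m` (m < n) gives injections `A^N ↪ A^m` for all `N`. -/
lemma iter_inj {m n : ℕ} (hmn : m < n)
    (f : (Fin n → A) →ₗ[A] (Fin m → A)) (hf : Function.Injective f) :
    ∀ N : ℕ, ∃ g : (Fin N → A) →ₗ[A] (Fin m → A), Function.Injective g := by
  intro N
  induction N using Nat.strong_induction_on with
  | _ N ih =>
    rcases le_or_gt N n with hN | hN
    · obtain ⟨p, hp⟩ := pad_exists (A := A) A hN
      exact ⟨f.comp p, hf.comp hp⟩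
    · set d := n - m with hd_def
      have hd : 0 < d := Nat.sub_pos_of_lt hmn
      have h1 : N - d < N := Nat.sub_lt (by omega) hd
      obtain ⟨g, hg⟩ := ih (N - d) h1
      have hN1 : N = d + (N - d) := by omega
      have hn1 : d + m = n := by omega
      let e1 : (Fin N → A) ≃ₗ[A] (Fin (d + (N - d)) → A) :=
        LinearEquiv.funCongrLeft A A (finCongr hN1.symm)
      let e2 := splitEquiv (A := A) A d (N - d)
      let pm : ((Fin d → A) × (Fin (N - d) → A)) →ₗ[A] ((Fin d → A) × (Fin m → A)) :=
        LinearMap.prodMap LinearMap.id g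
      have hpm : Function.Injective pm := by
        intro x y hxy
        have hx1 := congrArg Prod.fst hxy
        have hx2 := congrArg Prod.snd hxy
        simp only [pm, LinearMap.prodMap_apply, LinearMap.id_apply] at hx1 hx2
        exact Prod.ext hx1 (hg hx2)
      let e3 := (splitEquiv (A := A) A d m).symm
      let e4 : (Fin (d + m) → A) ≃ₗ[A] (Fin n → A) :=
        LinearEquiv.funCongrLeft A A (finCongr hn1.symm)
      refine ⟨f ∘ₗ e4.toLinearMap ∘ₗ e3.toLinearMap ∘ₗ pm ∘ₗ e2.toLinearMap ∘ₗ e1.toLinearMap, ?_⟩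
      exact hf.comp (e4.injective.comp (e3.injective.comp (hpm.comp
        (e2.injective.comp e1.injective))))

/-- From the separating property of a module `Q`, get an injection `B ↪ Q^k`. -/
lemma sep_to_embedding {B : Type w} [Ring B] (Q : ModuleCat.{w} B)
    (hQ : ∀ (M N : ModuleCat B) (f : M ⟶ N), f ≠ 0 → ∃ h : Q ⟶ M, h ≫ f ≠ 0) :
    ∃ (k : ℕ) (s : B →ₗ[B] (Fin k → Q)), Function.Injective s := by
  classical
  have hT : (⨆ f : Q →ₗ[B] B, LinearMap.range f) = ⊤ := by
    by_contra hT
    set T := ⨆ f : Q →ₗ[B] B, LinearMap.range f with hTdef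
    have h1 : (1 : B) ∉ T := by
      intro h1
      apply hT
      rw [Submodule.eq_top_iff']
      intro x
      simpa using T.smul_mem x h1
    have hq : (ModuleCat.ofHom T.mkQ : ModuleCat.of B B ⟶ ModuleCat.of B (B ⧸ T)) ≠ 0 := by
      intro h0
      apply h1
      have : T.mkQ (1 : B) = 0 := by
        rw [show T.mkQ = (0 : B →ₗ[B] B ⧸ T) from congrArg ModuleCat.Hom.hom h0]
        rfl
      rwa [Submodule.mkQ_apply, Submodule.Quotient.mk_eq_zero] at this
    obtain ⟨h, hh⟩ := hQ (ModuleCat.of B B) (ModuleCat.of B (B ⧸ T))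
      (ModuleCat.ofHom T.mkQ : ModuleCat.of B B ⟶ ModuleCat.of B (B ⧸ T)) hq
    apply hh
    apply ModuleCat.hom_ext
    show T.mkQ.comp h.hom = 0
    apply LinearMap.ext
    intro x
    have hx : h.hom x ∈ T := by
      rw [hTdef]
      exact le_iSup (fun f : Q →ₗ[B] B => LinearMap.range f) h.hom (LinearMap.mem_range_self _ x)
    simpa [Submodule.Quotient.mk_eq_zero] using hx
  have h1T : (1 : B) ∈ (⨆ f : Q →ₗ[B] B, LinearMap.range f) := hT ▸ Submodule.mem_top
  obtain ⟨w, hw, hw1⟩ := (Submodule.mem_iSup_iff_exists_finsupp _ _).mp h1T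
  choose p hp using fun f : Q →ₗ[B] B => LinearMap.mem_range.mp (hw f)
  let π : ({ x // x ∈ w.support } → Q) →ₗ[B] B :=
    ∑ i ∈ w.support.attach, (i.1).comp (LinearMap.proj i)
  have hπ : Function.Surjective π := by
    intro b
    refine ⟨fun i => b • p i.1, ?_⟩
    have hev : π (fun i => b • p i.1) = ∑ i ∈ w.support.attach, (i.1 : Q →ₗ[B] B) (b • p i.1) := by
      simp [π, LinearMap.sum_apply, LinearMap.comp_apply, LinearMap.proj_apply]
    rw [hev]
    have hcongr : ∀ i ∈ w.support.attach, (i.1 : Q →ₗ[B] B) (b • p i.1) = b • w i.1 := by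
      intro i _
      rw [map_smul, hp]
    rw [Finset.sum_congr rfl hcongr, ← Finset.smul_sum,
      Finset.sum_attach w.support (fun f => w f)]
    have hsum : ∑ f ∈ w.support, w f = (1 : B) := by
      simpa [Finsupp.sum] using hw1
    rw [hsum, smul_eq_mul, mul_one]
  obtain ⟨s, hs⟩ := Module.projective_lifting_property π LinearMap.id hπ
  have hsi : Function.Injective s := by
    intro x y hxy
    have hx1 := LinearMap.congr_fun hs x
    have hx2 := LinearMap.congr_fun hs y
    simp only [LinearMap.comp_apply, LinearMap.id_apply] at hx1 hx2
    rw [← hx1, ← hx2, hxy]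
  refine ⟨w.support.card,
    (LinearEquiv.funCongrLeft B Q w.support.equivFin.symm).toLinearMap ∘ₗ s, ?_⟩
  exact (LinearEquiv.funCongrLeft B Q w.support.equivFin.symm).injective.comp hsi

/-- The ring, as a module over itself, separates morphisms in `ModuleCat`. -/
lemma sep_self {A' : Type w} [Ring A'] (M N : ModuleCat.{w} A') (f : M ⟶ N) (hf : f ≠ 0) :
    ∃ h : ModuleCat.of A' A' ⟶ M, h ≫ f ≠ 0 := by
  have hx : ∃ x : M, f.hom x ≠ 0 := by
    by_contra hc
    push_neg at hc
    exact hf (ModuleCat.hom_ext (LinearMap.ext fun x => hc x))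
  obtain ⟨x, hx⟩ := hx
  refine ⟨(ModuleCat.ofHom (LinearMap.toSpanSingleton A' M x) : ModuleCat.of A' A' ⟶ M), fun h0 => hx ?_⟩
  have h1 := LinearMap.congr_fun
    (show f.hom.comp (LinearMap.toSpanSingleton A' M x) = 0 from congrArg ModuleCat.Hom.hom h0) (1 : A')
  simpa [LinearMap.comp_apply, LinearMap.toSpanSingleton_apply_one] using h1

/-- Transferring the separating property across an additive equivalence. -/
lemma sep_transfer {A' : Type w1} {B' : Type w2} [Ring A'] [Ring B']
    (e : ModuleCat.{w1} A' ≌ ModuleCat.{w2} B') [e.functor.Additive]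
    (M N : ModuleCat.{w2} B') (f : M ⟶ N) (hf : f ≠ 0) :
    ∃ h : e.functor.obj (ModuleCat.of A' A') ⟶ M, h ≫ f ≠ 0 := by
  haveI : e.inverse.Additive := e.inverse_additive
  haveI : Functor.PreservesZeroMorphisms e.inverse :=
    Functor.preservesZeroMorphisms_of_additive e.inverse
  haveI : Functor.PreservesZeroMorphisms e.functor :=
    Functor.preservesZeroMorphisms_of_additive e.functor
  have hGf : e.inverse.map f ≠ 0 := fun h0 =>
    hf (e.inverse.map_injective (by rw [h0, e.inverse.map_zero M N]))
  obtain ⟨h, hh⟩ := sep_self _ _ (e.inverse.map f) hGf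
  refine ⟨e.functor.map h ≫ e.counitIso.hom.app M, fun h0 => hh ?_⟩
  apply e.functor.map_injective
  rw [Functor.map_comp, e.functor.map_zero _ _]
  have h2 : e.functor.map (e.inverse.map f) ≫ e.counitIso.hom.app N
      = e.counitIso.hom.app M ≫ f := by
    simpa only [Functor.id_map, Functor.comp_map] using e.counitIso.hom.naturality f
  have h3 : (e.functor.map h ≫ e.functor.map (e.inverse.map f)) ≫ e.counitIso.hom.app N = 0 := by
    rw [Category.assoc, h2, ← Category.assoc, h0]
  have h5 := congrArg (fun g => g ≫ e.counitIso.inv.app N) h3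
  simpa using h5

end Helpers

open CategoryTheory.Limits

/-- A ring `R` satisfies the (right) strong rank condition if for all positive integers
`m < n` there is no injective homomorphism of right `R`-modules `R^n → R^m`.
Right `R`-modules are treated as left modules over the opposite ring `Rᵐᵒᵖ`. -/
def RightStrongRankCondition (R : Type*) [Ring R] : Prop :=
  ∀ m n : ℕ, 0 < m → m < n →
    ¬ ∃ f : (Fin n → Rᵐᵒᵖ) →ₗ[Rᵐᵒᵖ] (Fin m → Rᵐᵒᵖ), Function.Injective f

/-- The strong rank condition is Morita invariant: if the categories of right modules
over `R` and over `S` are equivalent via an additive functor and `R` satisfies the strong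
rank condition, then `S` satisfies the strong rank condition. -/
theorem statement10 {R : Type u} {S : Type v} [Ring R] [Ring S]
    (e : ModuleCat.{u} Rᵐᵒᵖ ≌ ModuleCat.{v} Sᵐᵒᵖ) (he : e.functor.Additive)
    (hR : RightStrongRankCondition R) :
    RightStrongRankCondition S := by
  haveI := he
  rintro m n hm hmn ⟨f, hf⟩
  classical
  -- `Q` : the image of the base ring `Rᵐᵒᵖ`, as an `Sᵐᵒᵖ`-module
  let Q : ModuleCat.{v} Sᵐᵒᵖ := e.functor.obj (ModuleCat.of Rᵐᵒᵖ Rᵐᵒᵖ)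
  -- `σ₀` : an embedding `Sᵐᵒᵖ ↪ Q^(l+1)`
  obtain ⟨l, σ₀, hσ₀⟩ := sep_to_embedding Q (fun M N g hg => sep_transfer e M N g hg)
  obtain ⟨pσ, hpσ⟩ := pad_exists (A := Sᵐᵒᵖ) (Q : Type v) (Nat.le_succ l)
  let σ : Sᵐᵒᵖ →ₗ[Sᵐᵒᵖ] (Fin (l + 1) → Q) := pσ.comp σ₀
  have hσ : Function.Injective σ := hpσ.comp hσ₀
  -- `P` : the image of `Sᵐᵒᵖ` under the inverse functor, and an embedding `Rᵐᵒᵖ ↪ P^k`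
  haveI : e.symm.functor.Additive := e.inverse_additive
  let P : ModuleCat.{u} Rᵐᵒᵖ := e.inverse.obj (ModuleCat.of Sᵐᵒᵖ Sᵐᵒᵖ)
  obtain ⟨k, s, hs⟩ := sep_to_embedding P (fun M N g hg => sep_transfer e.symm M N g hg)
  -- `τ` : an embedding `Q ↪ (Sᵐᵒᵖ)^k`, obtained by applying the equivalence to `s`
  let sMor : ModuleCat.of Rᵐᵒᵖ Rᵐᵒᵖ ⟶ ModuleCat.of Rᵐᵒᵖ (Fin k → P) := ModuleCat.ofHom s
  haveI hsm : Mono sMor := (ModuleCat.mono_iff_injective sMor).mpr hs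
  let i1 : ModuleCat.of Rᵐᵒᵖ (Fin k → P) ≅ (⨁ fun _ : Fin k => P) :=
    (ModuleCat.biproductIsoPi (fun _ : Fin k => P)).symm
  let i2 : e.functor.obj (⨁ fun _ : Fin k => P) ≅ ⨁ (e.functor.obj ∘ fun _ : Fin k => P) :=
    Functor.mapBiproduct e.functor _
  let i3 : (⨁ (e.functor.obj ∘ fun _ : Fin k => P)) ≅
      (⨁ fun _ : Fin k => ModuleCat.of Sᵐᵒᵖ Sᵐᵒᵖ) :=
    biproduct.mapIso (fun _ => e.counitIso.app (ModuleCat.of Sᵐᵒᵖ Sᵐᵒᵖ))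
  let i4 : (⨁ fun _ : Fin k => ModuleCat.of Sᵐᵒᵖ Sᵐᵒᵖ) ≅ ModuleCat.of Sᵐᵒᵖ (Fin k → Sᵐᵒᵖ) :=
    ModuleCat.biproductIsoPi _
  have hτ' : ∃ τ : (Q : Type v) →ₗ[Sᵐᵒᵖ] (Fin k → Sᵐᵒᵖ), Function.Injective τ := by
    have hmono : Mono (e.functor.map sMor ≫ (e.functor.mapIso i1).hom ≫ i2.hom ≫ i3.hom ≫
        i4.hom) := inferInstance
    exact ⟨_, (ModuleCat.mono_iff_injective _).mp hmono⟩
  obtain ⟨τ, hτ⟩ := hτ'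
  -- transferred strong rank condition for powers of `Q`
  have key : ∀ a b : ℕ, 0 < b → b < a →
      ¬ ∃ g : (Fin a → (Q : Type v)) →ₗ[Sᵐᵒᵖ] (Fin b → (Q : Type v)), Function.Injective g := by
    rintro a b hb hba ⟨g, hg⟩
    refine hR b a hb hba ?_
    let ψ : ∀ j : ℕ,
        e.functor.obj (ModuleCat.of Rᵐᵒᵖ (Fin j → Rᵐᵒᵖ)) ≅ ModuleCat.of Sᵐᵒᵖ (Fin j → Q) :=
      fun j =>
        e.functor.mapIso
            (ModuleCat.biproductIsoPi (fun _ : Fin j => ModuleCat.of Rᵐᵒᵖ Rᵐᵒᵖ)).symm ≪≫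
          Functor.mapBiproduct e.functor _ ≪≫
          biproduct.mapIso (fun _ => Iso.refl Q) ≪≫
          ModuleCat.biproductIsoPi (fun _ : Fin j => Q)
    let gMor : ModuleCat.of Sᵐᵒᵖ (Fin a → Q) ⟶ ModuleCat.of Sᵐᵒᵖ (Fin b → Q) := ModuleCat.ofHom g
    haveI : Mono gMor := (ModuleCat.mono_iff_injective gMor).mpr hg
    let u' : e.functor.obj (ModuleCat.of Rᵐᵒᵖ (Fin a → Rᵐᵒᵖ)) ⟶
        e.functor.obj (ModuleCat.of Rᵐᵒᵖ (Fin b → Rᵐᵒᵖ)) :=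
      (ψ a).hom ≫ gMor ≫ (ψ b).inv
    haveI hu' : Mono u' := by
      have : Mono ((ψ a).hom ≫ gMor ≫ (ψ b).inv) := inferInstance
      exact this
    have hu : Mono (e.functor.preimage u') := by
      apply e.functor.mono_of_mono_map
      rw [Functor.map_preimage]
      exact hu'
    exact ⟨(e.functor.preimage u').hom, (ModuleCat.mono_iff_injective _).mp hu⟩
  -- assembly : `Q^(m(l+1)+1) ↪ S^(k(m(l+1)+1)) ↪ S^m ↪ Q^(m(l+1))`, contradiction
  have hbpos : 0 < m * (l + 1) := Nat.mul_pos hm (Nat.succ_pos l)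
  obtain ⟨it, hit⟩ := iter_inj hmn f hf ((m * (l + 1) + 1) * k)
  let g1 : (Fin (m * (l + 1) + 1) → (Q : Type v)) →ₗ[Sᵐᵒᵖ] (Fin ((m * (l + 1) + 1) * k) → Sᵐᵒᵖ) :=
    (reindexEquiv (A := Sᵐᵒᵖ) Sᵐᵒᵖ (m * (l + 1) + 1) k).toLinearMap.comp
      (τ.compLeft (Fin (m * (l + 1) + 1)))
  have hg1 : Function.Injective g1 :=
    (reindexEquiv (A := Sᵐᵒᵖ) Sᵐᵒᵖ (m * (l + 1) + 1) k).injective.comp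
      (compLeft_injective τ hτ _)
  let g2 : (Fin m → Sᵐᵒᵖ) →ₗ[Sᵐᵒᵖ] (Fin (m * (l + 1)) → (Q : Type v)) :=
    (reindexEquiv (A := Sᵐᵒᵖ) (Q : Type v) m (l + 1)).toLinearMap.comp (σ.compLeft (Fin m))
  have hg2 : Function.Injective g2 :=
    (reindexEquiv (A := Sᵐᵒᵖ) (Q : Type v) m (l + 1)).injective.comp
      (compLeft_injective σ hσ _)
  exact key (m * (l + 1) + 1) (m * (l + 1)) hbpos (lt_add_one _)
    ⟨g2.comp (it.comp g1), hg2.comp (hit.comp hg1)⟩
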